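/- Let f > 0, γ ≥ 0, B_D > 0, A > 0, r ≥ 0 satisfy f·γ < A + r, and let N ≥ 2 be a natural number. Define the per-investor liquidity amount x* = ((N − 1)/N²)·B_D·f/(A + r − f·γ) and S = (N − 1)·x*. Then for every x ≥ 0, g_S(x) ≤ g_S(x*), where g_S(x) = f·x·(B_D + γ·(x + S))/(x + S) − (A + r)·x. That is, the symmetric profile in which each of the N investors provides liquidity x* is a Nash equilibrium of the simultaneous liquidity provision game. -/

import Mathlib

/-- The symmetric profile where each of the `N` investors provides
`x* = ((N − 1)/N²)·B_D·f/(A + r − f·γ)` is a Nash equilibrium: given the others' total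
`S = (N − 1)·x*`, no deviation `x ≥ 0` yields a higher payoff than `x*`. -/
theorem symmetric_nash_equilibrium
    (f γ B_D A r : ℝ) (hf : 0 < f) (hγ : 0 ≤ γ) (hB : 0 < B_D) (hA : 0 < A)
    (hr : 0 ≤ r) (hlow : f * γ < A + r) (N : ℕ) (hN : 2 ≤ N) :
    ∀ x : ℝ, 0 ≤ x →
      f * x *
          (B_D + γ * (x + ((N : ℝ) - 1) *
            (((N : ℝ) - 1) / (N : ℝ) ^ 2 * B_D * f / (A + r - f * γ)))) /
          (x + ((N : ℝ) - 1) * (((N : ℝ) - 1) / (N : ℝ) ^ 2 * B_D * f / (A + r - f * γ))) -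
        (A + r) * x ≤
      f * (((N : ℝ) - 1) / (N : ℝ) ^ 2 * B_D * f / (A + r - f * γ)) *
          (B_D + γ * ((((N : ℝ) - 1) / (N : ℝ) ^ 2 * B_D * f / (A + r - f * γ)) +
            ((N : ℝ) - 1) * (((N : ℝ) - 1) / (N : ℝ) ^ 2 * B_D * f / (A + r - f * γ)))) /
          ((((N : ℝ) - 1) / (N : ℝ) ^ 2 * B_D * f / (A + r - f * γ)) +
            ((N : ℝ) - 1) * (((N : ℝ) - 1) / (N : ℝ) ^ 2 * B_D * f / (A + r - f * γ))) -
        (A + r) * (((N : ℝ) - 1) / (N : ℝ) ^ 2 * B_D * f / (A + r - f * γ)) := by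
  intro x hx
  set c : ℝ := A + r - f * γ with hc_def
  have hc : 0 < c := by simp [hc_def]; linarith
  have ht : (2 : ℝ) ≤ (N : ℝ) := by exact_mod_cast hN
  have ht1 : 0 < (N : ℝ) - 1 := by linarith
  have ht2 : 0 < (N : ℝ) ^ 2 := by positivity
  set xs : ℝ := ((N : ℝ) - 1) / (N : ℝ) ^ 2 * B_D * f / c with hxs_def
  have hxs : 0 < xs := by positivity
  set S : ℝ := ((N : ℝ) - 1) * xs with hS_def
  have hS : 0 < S := by positivity
  have hxS : 0 < x + S := by linarith
  have hxsS : 0 < xs + S := by linarith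
  -- key identity: c * (xs + S)^2 = f * B_D * S
  have hkey : c * (xs + S) ^ 2 = f * B_D * S := by
    have hxsN : xs + S = (N : ℝ) * xs := by rw [hS_def]; ring
    have hxsval : c * xs = ((N : ℝ) - 1) / (N : ℝ) ^ 2 * B_D * f := by
      rw [hxs_def]; field_simp
    rw [hxsN, hS_def]
    have : c * ((N : ℝ) * xs) ^ 2 = (N : ℝ) ^ 2 * xs * (c * xs) := by ring
    rw [this, hxsval]
    field_simp
  have hAr : A + r = c + f * γ := by rw [hc_def]; ring
  rw [hAr]
  rw [div_sub' (ne_of_gt hxS), div_sub' (ne_of_gt hxsS),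
    div_le_div_iff₀ hxS hxsS]
  nlinarith [mul_nonneg (mul_nonneg hc.le hxsS.le) (sq_nonneg (xs - x)),
    sq_nonneg (xs - x), mul_pos hxS hxsS]
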